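/- (Completeness of d-separation in C-DAGs.) Let G_C be a C-ADMG over an admissible partition C = {C_1, …, C_r} of a finite set V in which every cluster is nonempty, and let 𝒳, 𝒴, 𝒵 be pairwise disjoint sets of clusters. If 𝒳 and 𝒴 are not m-separated by 𝒵 in the cluster graph G_C, then there exists an ADMG G over V compatible with G_C in which the vertex sets ∪𝒳 and ∪𝒴 are not m-separated by ∪𝒵 in G. -/

import Mathlib

/-- A directed mixed graph over a vertex type `V`: a set of directed edges and a
symmetric set of bidirected edges between distinct vertices. -/
structure DMG (V : Type) where
  dir : V → V → Prop
  bidir : V → V → Prop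
  bidir_symm : ∀ x y, bidir x y → bidir y x
  dir_ne : ∀ x y, dir x y → x ≠ y
  bidir_ne : ∀ x y, bidir x y → x ≠ y

namespace DMG

variable {V : Type} {I : Type}

/-- `X` is an ancestor of `Y`: there is a directed path of length ≥ 1 from `X` to `Y`. -/
def Anc (G : DMG V) : V → V → Prop := Relation.TransGen G.dir

/-- No directed cycles. -/
def Acyclic (G : DMG V) : Prop := ∀ x, ¬ G.Anc x x

/-- No bidirected edges. -/
def NoBidir (G : DMG V) : Prop := ∀ x y, ¬ G.bidir x y

/-- A DAG: no bidirected edges and no directed cycles. -/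
def IsDAG (G : DMG V) : Prop := G.Acyclic ∧ G.NoBidir

/-- Two vertices are adjacent if joined by a directed or bidirected edge. -/
def Adj (G : DMG V) (x y : V) : Prop := G.dir x y ∨ G.dir y x ∨ G.bidir x y

/-- Ancestral graph: no directed cycle, no almost directed cycle. -/
def Ancestral (G : DMG V) : Prop :=
  G.Acyclic ∧ ∀ x y, G.bidir x y → ¬ G.Anc x y

/-- The cluster graph induced by `G` on the partition of `V` into the fibers of `π`. -/
def clusterGraph (G : DMG V) (π : V → I) : DMG I where
  dir i j := i ≠ j ∧ ∃ x y, π x = i ∧ π y = j ∧ G.dir x y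
  bidir i j := i ≠ j ∧ ∃ x y, π x = i ∧ π y = j ∧ G.bidir x y
  bidir_symm := by
    rintro i j ⟨hne, x, y, hx, hy, hb⟩
    exact ⟨hne.symm, y, x, hy, hx, G.bidir_symm _ _ hb⟩
  dir_ne := fun _ _ h => h.1
  bidir_ne := fun _ _ h => h.1

/-- `G` is compatible with the cluster graph `GC` (over the partition given by the
fibers of `π`) if the cluster graph induced by `G` equals `GC`. -/
def CompatibleWith (G : DMG V) (π : V → I) (GC : DMG I) : Prop :=
  (∀ i j, GC.dir i j ↔ (G.clusterGraph π).dir i j) ∧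
  (∀ i j, GC.bidir i j ↔ (G.clusterGraph π).bidir i j)

/-- Walks in a directed mixed graph: each consecutive pair of vertices is joined
by a directed edge (in either direction) or a bidirected edge, and we remember
which edge is used. -/
inductive Walk (G : DMG V) : V → V → Type
  | nil (x : V) : Walk G x x
  | fwd {x y z : V} (h : G.dir x y) (w : Walk G y z) : Walk G x z
  | bwd {x y z : V} (h : G.dir y x) (w : Walk G y z) : Walk G x z
  | bi  {x y z : V} (h : G.bidir x y) (w : Walk G y z) : Walk G x z

namespace Walk

variable {G : DMG V}

/-- The list of vertices visited by a walk. -/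
def support : {x y : V} → Walk G x y → List V
  | _, _, .nil x => [x]
  | _, _, .fwd (x := x) _ w => x :: w.support
  | _, _, .bwd (x := x) _ w => x :: w.support
  | _, _, .bi (x := x) _ w => x :: w.support

/-- Whether a walk is trivial. -/
def isNil : {x y : V} → Walk G x y → Bool
  | _, _, .nil _ => true
  | _, _, .fwd _ _ => false
  | _, _, .bwd _ _ => false
  | _, _, .bi _ _ => false

/-- Whether the first edge of the walk has an arrowhead at the first vertex. -/
def headAtStart : {x y : V} → Walk G x y → Bool
  | _, _, .nil _ => false
  | _, _, .fwd _ _ => false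
  | _, _, .bwd _ _ => true
  | _, _, .bi _ _ => true

/-- The internal (non-endpoint) vertices of a walk, each paired with a Boolean
recording whether it is a collider on the walk (both incident edges of the walk
have an arrowhead at it). -/
def marked : {x y : V} → Walk G x y → List (V × Bool)
  | _, _, .nil _ => []
  | _, _, .fwd (y := y) _ w => (if w.isNil then [] else [(y, w.headAtStart)]) ++ w.marked
  | _, _, .bwd (y := y) _ w => (if w.isNil then [] else [(y, false)]) ++ w.marked
  | _, _, .bi (y := y) _ w => (if w.isNil then [] else [(y, w.headAtStart)]) ++ w.marked

/-- A walk is a path if its vertices are pairwise distinct. -/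
def IsPath {x y : V} (w : Walk G x y) : Prop := w.support.Nodup

/-- A walk is blocked by `S` if it contains a non-collider belonging to `S`, or a
collider such that neither the collider nor any of its descendants belongs to `S`. -/
def Blocked {x y : V} (w : Walk G x y) (S : Set V) : Prop :=
  ∃ p ∈ w.marked,
    (p.2 = false ∧ p.1 ∈ S) ∨
    (p.2 = true ∧ p.1 ∉ S ∧ ∀ d, G.Anc p.1 d → d ∉ S)

end Walk

/-- `x` and `y` are m-separated by `S` in `G`: every path between `x` and `y`
is blocked by `S`.  (In a DAG this is d-separation.) -/
def MSep (G : DMG V) (x y : V) (S : Set V) : Prop :=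
  ∀ w : Walk G x y, w.IsPath → w.Blocked S

/-- Vertex sets `A` and `B` are m-separated by `S`. -/
def MSepSets (G : DMG V) (A B S : Set V) : Prop :=
  ∀ x ∈ A, ∀ y ∈ B, G.MSep x y S

/-- The induced subgraph of `G` on a set `A` of vertices. -/
def induce (G : DMG V) (A : Set V) : DMG A where
  dir x y := G.dir x.1 y.1
  bidir x y := G.bidir x.1 y.1
  bidir_symm := fun _ _ h => G.bidir_symm _ _ h
  dir_ne := fun _ _ h he => G.dir_ne _ _ h (congrArg Subtype.val he)
  bidir_ne := fun _ _ h he => G.bidir_ne _ _ h (congrArg Subtype.val he)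

namespace Walk

variable {G : DMG V} {GC : DMG I}

/-- Lift a walk along vertex-wise edge liftings. -/
def lift {s : I → V}
    (hd : ∀ i j, GC.dir i j → G.dir (s i) (s j))
    (hb : ∀ i j, GC.bidir i j → G.bidir (s i) (s j)) :
    {i j : I} → Walk GC i j → Walk G (s i) (s j)
  | _, _, .nil i => .nil (s i)
  | _, _, .fwd h w => .fwd (hd _ _ h) (lift hd hb w)
  | _, _, .bwd h w => .bwd (hd _ _ h) (lift hd hb w)
  | _, _, .bi h w => .bi (hb _ _ h) (lift hd hb w)

variable {s : I → V}
  {hd : ∀ i j, GC.dir i j → G.dir (s i) (s j)}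
  {hb : ∀ i j, GC.bidir i j → G.bidir (s i) (s j)}

theorem support_lift : ∀ {i j : I} (w : Walk GC i j),
    (w.lift hd hb).support = w.support.map s
  | _, _, .nil i => rfl
  | _, _, .fwd h w => by simp [lift, support, support_lift w]
  | _, _, .bwd h w => by simp [lift, support, support_lift w]
  | _, _, .bi h w => by simp [lift, support, support_lift w]

theorem isNil_lift : ∀ {i j : I} (w : Walk GC i j),
    (w.lift hd hb).isNil = w.isNil
  | _, _, .nil i => rfl
  | _, _, .fwd h w => rfl
  | _, _, .bwd h w => rfl
  | _, _, .bi h w => rfl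

theorem headAtStart_lift : ∀ {i j : I} (w : Walk GC i j),
    (w.lift hd hb).headAtStart = w.headAtStart
  | _, _, .nil i => rfl
  | _, _, .fwd h w => rfl
  | _, _, .bwd h w => rfl
  | _, _, .bi h w => rfl

theorem marked_lift : ∀ {i j : I} (w : Walk GC i j),
    (w.lift hd hb).marked = w.marked.map (fun p => (s p.1, p.2))
  | _, _, .nil i => rfl
  | _, _, .fwd h w => by
      simp [lift, marked, marked_lift w, isNil_lift w, headAtStart_lift w]
      split <;> simp
  | _, _, .bwd h w => by
      simp [lift, marked, marked_lift w, isNil_lift w]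
      split <;> simp
  | _, _, .bi h w => by
      simp [lift, marked, marked_lift w, isNil_lift w, headAtStart_lift w]
      split <;> simp

end Walk

end DMG

open DMG in
/-- Completeness of d-separation in C-DAGs: if sets of clusters `𝒳`
and `𝒴` are not m-separated by `𝒵` in the C-ADMG `GC` (over a partition with all
clusters nonempty), then there exists a compatible ADMG `G` in which the unions of
the clusters in `𝒳` and `𝒴` are not m-separated by the union of `𝒵`. -/
theorem stmt6 {V I : Type} [Fintype V]
    (π : V → I) (hsurj : Function.Surjective π)
    (GC : DMG I) (hadm : GC.Acyclic)
    (𝒳 𝒴 𝒵 : Set I)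
    (hXY : Disjoint 𝒳 𝒴) (hXZ : Disjoint 𝒳 𝒵) (hYZ : Disjoint 𝒴 𝒵)
    (hnsep : ¬ GC.MSepSets 𝒳 𝒴 𝒵) :
    ∃ G : DMG V, G.Acyclic ∧ G.CompatibleWith π GC ∧
      ¬ G.MSepSets (π ⁻¹' 𝒳) (π ⁻¹' 𝒴) (π ⁻¹' 𝒵) := by
  classical
  set s : I → V := Function.surjInv hsurj with hsdef
  have hs : ∀ i, π (s i) = i := fun i => Function.surjInv_eq hsurj i
  have hsinj : Function.Injective s := by
    intro a b h
    have := congrArg π h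
    rwa [hs, hs] at this
  refine ⟨{
    dir := fun x y => GC.dir (π x) (π y) ∧ x = s (π x) ∧ y = s (π y)
    bidir := fun x y => GC.bidir (π x) (π y) ∧ x = s (π x) ∧ y = s (π y)
    bidir_symm := fun x y ⟨h, hx, hy⟩ => ⟨GC.bidir_symm _ _ h, hy, hx⟩
    dir_ne := fun x y ⟨h, _, _⟩ he => GC.dir_ne _ _ h (by rw [he])
    bidir_ne := fun x y ⟨h, _, _⟩ he => GC.bidir_ne _ _ h (by rw [he]) },
    ?_, ⟨?_, ?_⟩, ?_⟩
  · -- acyclicity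
    intro x hx
    exact hadm (π x) (Relation.TransGen.lift π (fun a b h => h.1) _ _ hx)
  · -- dir compatibility
    intro i j
    constructor
    · intro h
      refine ⟨GC.dir_ne _ _ h, s i, s j, hs i, hs j, ?_, ?_, ?_⟩
      · rw [hs, hs]; exact h
      · rw [hs]
      · rw [hs]
    · rintro ⟨hne, x, y, hx, hy, h, -, -⟩
      rwa [hx, hy] at h
  · -- bidir compatibility
    intro i j
    constructor
    · intro h
      refine ⟨GC.bidir_ne _ _ h, s i, s j, hs i, hs j, ?_, ?_, ?_⟩
      · rw [hs, hs]; exact h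
      · rw [hs]
      · rw [hs]
    · rintro ⟨hne, x, y, hx, hy, h, -, -⟩
      rwa [hx, hy] at h
  · -- non-separation
    set G : DMG V := {
      dir := fun x y => GC.dir (π x) (π y) ∧ x = s (π x) ∧ y = s (π y)
      bidir := fun x y => GC.bidir (π x) (π y) ∧ x = s (π x) ∧ y = s (π y)
      bidir_symm := fun x y ⟨h, hx, hy⟩ => ⟨GC.bidir_symm _ _ h, hy, hx⟩
      dir_ne := fun x y ⟨h, _, _⟩ he => GC.dir_ne _ _ h (by rw [he])
      bidir_ne := fun x y ⟨h, _, _⟩ he => GC.bidir_ne _ _ h (by rw [he]) } with hGdef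
    have hd : ∀ i j, GC.dir i j → G.dir (s i) (s j) := by
      intro i j h
      refine ⟨by rw [hs, hs]; exact h, by rw [hs], by rw [hs]⟩
    have hb : ∀ i j, GC.bidir i j → G.bidir (s i) (s j) := by
      intro i j h
      refine ⟨by rw [hs, hs]; exact h, by rw [hs], by rw [hs]⟩
    simp only [MSepSets, MSep] at hnsep ⊢
    push_neg at hnsep ⊢
    obtain ⟨i, hi, j, hj, w, hwp, hwb⟩ := hnsep
    refine ⟨s i, by simp [Set.mem_preimage, hs, hi], s j,
      by simp [Set.mem_preimage, hs, hj], w.lift hd hb, ?_, ?_⟩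
    · -- is a path
      rw [Walk.IsPath, Walk.support_lift]
      exact hwp.map hsinj
    · -- not blocked
      intro hbl
      apply hwb
      obtain ⟨p, hpmem, hp⟩ := hbl
      rw [Walk.marked_lift] at hpmem
      obtain ⟨q, hq, rfl⟩ := List.mem_map.1 hpmem
      refine ⟨q, hq, ?_⟩
      rcases hp with ⟨h1, h2⟩ | ⟨h1, h2, h3⟩
      · left
        refine ⟨h1, ?_⟩
        have : π (s q.1) ∈ 𝒵 := h2
        rwa [hs] at this
      · right
        refine ⟨h1, fun hz => h2 (by simpa [Set.mem_preimage, hs] using hz), ?_⟩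
        intro d hd' hdz
        exact h3 (s d) (Relation.TransGen.lift s (fun a b h => hd a b h) _ _ hd')
          (by simpa [Set.mem_preimage, hs] using hdz)
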